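/- Let G be a finite connected simple graph and s a vertex with eccentricity e(s) = max_v dist(s,v). Under threshold-1 Greenberg–Hastings dynamics started from the configuration in which s is excited and every other vertex is resting, every vertex is resting at every time t ≥ e(s) + 2. (A single excitation wave annihilates after reaching the boundary of the graph.) -/
import Mathlib

/-- The three states of a Greenberg–Hastings excitable automaton node. -/
inductive GHState where
  | resting : GHState
  | excited : GHState
  | refractory : GHState
deriving DecidableEq

open GHState

/-- Number of excited neighbours of `v` in configuration `c`. -/
def excitedCount {V : Type*} (G : SimpleGraph V) [Fintype V] [DecidableRel G.Adj]
    (c : V → GHState) (v : V) : ℕ :=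
  ((G.neighborFinset v).filter (fun u => c u = excited)).card

/-- Greenberg–Hastings update map `F_S`: a resting vertex becomes excited iff its
number of excited neighbours lies in `S`; an excited vertex becomes refractory;
a refractory vertex becomes resting. -/
def ghStep {V : Type*} (G : SimpleGraph V) [Fintype V] [DecidableRel G.Adj]
    (S : Set ℕ) [DecidablePred (· ∈ S)] (c : V → GHState) : V → GHState :=
  fun v =>
    match c v with
    | resting => if excitedCount G c v ∈ S then excited else resting
    | excited => refractory
    | refractory => resting

lemma neighbor_closer {V : Type*} (G : SimpleGraph V) (hconn : G.Connected) (s v : V) (k : ℕ)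
    (h : G.dist s v = k + 1) : ∃ u, G.Adj u v ∧ G.dist s u = k := by
  obtain ⟨p, hp⟩ := (hconn v s).exists_walk_length_eq_dist
  rw [SimpleGraph.dist_comm, h] at hp
  cases p with
  | nil => simp at hp
  | @cons _ u _ hadj q =>
    refine ⟨u, hadj.symm, le_antisymm ?_ ?_⟩
    · rw [SimpleGraph.dist_comm]
      exact (SimpleGraph.dist_le q).trans (by simp at hp; omega)
    · have := hconn.dist_triangle (u := s) (v := u) (w := v)
      have h1 : G.dist u v = 1 := SimpleGraph.dist_eq_one_iff_adj.mpr hadj.symm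
      omega

lemma wave_profile {V : Type*} (G : SimpleGraph V)
    [Fintype V] [DecidableEq V] [DecidableRel G.Adj]
    (hconn : G.Connected) (s : V) (t : ℕ) (v : V) :
    (ghStep G {n : ℕ | 1 ≤ n})^[t] (fun u => if u = s then excited else resting) v
      = if G.dist s v = t then excited
        else if G.dist s v + 1 = t then refractory
        else resting := by
  induction t generalizing v with
  | zero =>
    simp only [Function.iterate_zero, id]
    by_cases h : v = s
    · subst h; simp
    · rw [if_neg h, if_neg (fun hd => h (hconn.dist_eq_zero_iff.mp hd).symm), if_neg (by omega)]
  | succ t ih =>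
    rw [Function.iterate_succ_apply']
    have hcv := ih v
    have hih := ih
    generalize hC : (ghStep G {n : ℕ | 1 ≤ n})^[t] (fun u => if u = s then excited else resting)
        = c at hcv hih ⊢
    unfold ghStep
    rcases eq_or_ne (G.dist s v) t with hd | hd
    · rw [if_pos hd] at hcv
      rw [hcv]; dsimp only
      rw [if_neg (by omega), if_pos (by omega)]
    · rcases eq_or_ne (G.dist s v + 1) t with hd1 | hd1
      · rw [if_neg hd, if_pos hd1] at hcv
        rw [hcv]; dsimp only
        rw [if_neg (by omega), if_neg (by omega)]
      · rw [if_neg hd, if_neg hd1] at hcv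
        rw [hcv]; dsimp only
        rcases eq_or_ne (G.dist s v) (t + 1) with hd2 | hd2
        · rw [if_pos hd2, if_pos]
          refine Finset.card_pos.mpr ?_
          obtain ⟨u, hadj, hu⟩ := neighbor_closer G hconn s v t hd2
          refine ⟨u, ?_⟩
          rw [Finset.mem_filter, SimpleGraph.mem_neighborFinset]
          exact ⟨hadj.symm, by rw [hih u, if_pos hu]⟩
        · rw [if_neg hd2, if_neg (fun h => hd (Nat.succ_injective h)), if_neg]
          simp only [Set.mem_setOf_eq, not_le, Nat.lt_one_iff]
          rw [excitedCount, Finset.card_eq_zero, Finset.filter_eq_empty_iff]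
          intro u hu
          rw [SimpleGraph.mem_neighborFinset] at hu
          rw [hih u]
          have h1 : G.dist v u = 1 := SimpleGraph.dist_eq_one_iff_adj.mpr hu
          have ht1 := hconn.dist_triangle (u := s) (v := v) (w := u)
          have ht2 := hconn.dist_triangle (u := s) (v := u) (w := v)
          rw [SimpleGraph.dist_comm (u := u) (v := v)] at ht2
          rw [if_neg (by omega)]
          split <;> simp

/-- Under threshold-1 Greenberg–Hastings dynamics started from a single excited
vertex `s` (all other vertices resting), every vertex is resting at every time
`t ≥ e(s) + 2`, where `e(s) = max_v dist(s,v)` is the eccentricity of `s`: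
a single excitation wave annihilates after reaching the boundary of the graph. -/
theorem single_wave_annihilates {V : Type*} (G : SimpleGraph V)
    [Fintype V] [DecidableEq V] [DecidableRel G.Adj]
    (hconn : G.Connected) (s : V) :
    ∀ t : ℕ, (Finset.univ.sup (fun v => G.dist s v)) + 2 ≤ t →
      ∀ v : V,
        (ghStep G {n : ℕ | 1 ≤ n})^[t] (fun u => if u = s then excited else resting) v
          = resting := by
  intro t ht v
  rw [wave_profile G hconn s t v]
  have hle : G.dist s v ≤ Finset.univ.sup (fun v => G.dist s v) :=
    Finset.le_sup (Finset.mem_univ v)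
  rw [if_neg (by omega), if_neg (by omega)]
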